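/- Let M > 0, and let a, l, Q, r be real numbers with β := a² − l² + Q² and Δ(x) := x² − 2Mx + β, and suppose r > r₊ := M + √(M² − β) (so Δ(r) > 0) with M² ≥ β. Then there is no polynomial P(x) with real coefficients such that [Δ'(x)(r² − x²) + 4xΔ(x)]² − 16x²Δ(r)Δ(x) = P(x)² identically in x. Consequently √(1 − h²(x)) is not a rational function of x, where h(x) = 4x√(Δ(r)Δ(x)) / (Δ'(x)(r² − x²) + 4xΔ(x)). -/

import Mathlib

open Polynomial

noncomputable def kntnFq (M β D r : ℝ) : Polynomial ℝ :=
  C (4*M^2*r^4) + C (-8*M*r^2*(r^2+2*β)) * X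
    + C (4*(r^2+2*β)^2 + 24*M^2*r^2 - 16*D*β) * X^2
    + C (-32*M*r^2 - 48*M*β + 32*D*M) * X^3
    + C (36*M^2 + 8*r^2 + 16*β - 16*D) * X^4
    + C (-24*M) * X^5 + C 4 * X^6

noncomputable def kntnGq (M β r : ℝ) : Polynomial ℝ :=
  C (-2*M*r^2) + C (2*r^2+4*β) * X + C (-6*M) * X^2 + C 2 * X^3

lemma kntnFq_eval (M β D r x : ℝ) (hD : D = r^2 - 2*M*r + β) :
    (kntnFq M β D r).eval x
      = ((2*x - 2*M) * (r^2 - x^2) + 4*x*(x^2 - 2*M*x + β))^2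
        - 16*x^2*D*(x^2 - 2*M*x + β) := by
  subst hD
  simp [kntnFq]
  ring

lemma kntnGq_eval (M β r x : ℝ) :
    (kntnGq M β r).eval x
      = (2*x - 2*M) * (r^2 - x^2) + 4*x*(x^2 - 2*M*x + β) := by
  simp [kntnGq]
  ring

lemma kntnFq_natDegree (M β D r : ℝ) : (kntnFq M β D r).natDegree = 6 := by
  unfold kntnFq; compute_degree!

lemma kntnFq_coeff6 (M β D r : ℝ) : (kntnFq M β D r).coeff 6 = 4 := by
  unfold kntnFq
  simp only [coeff_add, coeff_C_mul, coeff_X_pow, coeff_C, coeff_X]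
  norm_num

lemma kntnFq_not_sq (M β D r : ℝ) (hM : 0 < M) (hD : 0 < D) (hr : 0 < r)
    (P : Polynomial ℝ) (h : kntnFq M β D r = P ^ 2) : False := by
  have hP3 : P.natDegree = 3 := by
    have h2 : (P ^ 2).natDegree = 2 * P.natDegree := natDegree_pow P 2
    rw [← h, kntnFq_natDegree] at h2
    omega
  set p0 := P.coeff 0
  set p1 := P.coeff 1
  set p2 := P.coeff 2
  set p3 := P.coeff 3
  have hexp : P = C p0 + C p1 * X + C p2 * X^2 + C p3 * X^3 := by
    ext n
    simp only [coeff_add, coeff_C_mul, coeff_X_pow, coeff_C, coeff_X]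
    match n with
    | 0 => norm_num; rfl
    | 1 => norm_num; rfl
    | 2 => norm_num; rfl
    | 3 => norm_num; rfl
    | (m+4) =>
      have hne2 : ¬(m + 4 = 2) := by omega
      have hne3 : ¬(m + 4 = 3) := by omega
      rw [coeff_eq_zero_of_natDegree_lt (by omega : P.natDegree < m + 4),
        if_neg hne2, if_neg hne3]
      norm_num
  rw [hexp] at h
  have hsq : (C p0 + C p1 * X + C p2 * X^2 + C p3 * X^3)^2
      = C (p0^2) + C (2*p0*p1) * X + C (p1^2+2*p0*p2) * X^2
        + C (2*p0*p3+2*p1*p2) * X^3 + C (p2^2+2*p1*p3) * X^4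
        + C (2*p2*p3) * X^5 + C (p3^2) * X^6 := by
    simp only [C_mul, C_add, C_pow, map_ofNat]
    ring
  rw [hsq] at h
  have hc := Polynomial.ext_iff.mp h
  have e6 := hc 6
  have e5 := hc 5
  have e4 := hc 4
  have e3 := hc 3
  have e0 := hc 0
  simp only [kntnFq, coeff_add, coeff_C_mul, coeff_X_pow, coeff_C, coeff_X]
    at e6 e5 e4 e3 e0
  norm_num at e6 e5 e4 e3 e0
  clear h hc hsq hexp
  have hcases : (p3 - 2) * (p3 + 2) = 0 := by linear_combination -e6
  rcases mul_eq_zero.mp hcases with h3 | h3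
  · have hp3 : p3 = 2 := by linarith
    rw [hp3] at e5 e4 e3
    have hp2 : p2 = -6*M := by linarith
    rw [hp2] at e4 e3
    have hp1 : p1 = 2*r^2 + 4*β - 4*D := by linear_combination (-1/4 : ℝ) * e4
    rw [hp1] at e3
    have hp0 : p0 = -2*M*r^2 - 4*D*M := by linear_combination (-1/4 : ℝ) * e3
    rw [hp0] at e0
    have h0 : D * M^2 * (r^2 + D) = 0 := by linear_combination (-1/16 : ℝ) * e0
    have hpos : 0 < D * M^2 * (r^2 + D) := by positivity
    linarith
  · have hp3 : p3 = -2 := by linarith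
    rw [hp3] at e5 e4 e3
    have hp2 : p2 = 6*M := by linarith
    rw [hp2] at e4 e3
    have hp1 : p1 = -(2*r^2 + 4*β - 4*D) := by linear_combination (1/4 : ℝ) * e4
    rw [hp1] at e3
    have hp0 : p0 = 2*M*r^2 + 4*D*M := by linear_combination (1/4 : ℝ) * e3
    rw [hp0] at e0
    have h0 : D * M^2 * (r^2 + D) = 0 := by linear_combination (-1/16 : ℝ) * e0
    have hpos : 0 < D * M^2 * (r^2 + D) := by positivity
    linarith

/-- Irrationality of √(1−h²) for the Kerr-Newman-Taub-NUT shadow: with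
Δ(x) = x² − 2Mx + β, β = a² − l² + Q², M > 0, M² ≥ β, and observer radius
r > r₊ = M + √(M² − β), the degree-6 polynomial
[Δ'(x)(r²−x²) + 4xΔ(x)]² − 16x²Δ(r)Δ(x) is not the square of a real polynomial;
consequently √(1−h²(x)), with
h(x) = 4x√(Δ(r)Δ(x)) / (Δ'(x)(r²−x²) + 4xΔ(x)), is not a rational function. -/
theorem sqrt_one_sub_h_sq_irrational (M a l Q r : ℝ) (hM : 0 < M)
    (hβ : a ^ 2 - l ^ 2 + Q ^ 2 ≤ M ^ 2)
    (hr : M + Real.sqrt (M ^ 2 - (a ^ 2 - l ^ 2 + Q ^ 2)) < r) :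
    (¬ ∃ P : Polynomial ℝ, ∀ x : ℝ,
      ((2 * x - 2 * M) * (r ^ 2 - x ^ 2)
          + 4 * x * (x ^ 2 - 2 * M * x + (a ^ 2 - l ^ 2 + Q ^ 2))) ^ 2
        - 16 * x ^ 2 * (r ^ 2 - 2 * M * r + (a ^ 2 - l ^ 2 + Q ^ 2))
            * (x ^ 2 - 2 * M * x + (a ^ 2 - l ^ 2 + Q ^ 2))
        = (P.eval x) ^ 2) ∧
    (¬ ∃ p q : Polynomial ℝ, q ≠ 0 ∧ ∀ x : ℝ, r < x →
      Real.sqrt (1 -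
        (4 * x * Real.sqrt ((r ^ 2 - 2 * M * r + (a ^ 2 - l ^ 2 + Q ^ 2))
              * (x ^ 2 - 2 * M * x + (a ^ 2 - l ^ 2 + Q ^ 2)))
          / ((2 * x - 2 * M) * (r ^ 2 - x ^ 2)
              + 4 * x * (x ^ 2 - 2 * M * x + (a ^ 2 - l ^ 2 + Q ^ 2)))) ^ 2)
        = p.eval x / q.eval x) := by
  set β : ℝ := a ^ 2 - l ^ 2 + Q ^ 2 with hβdef
  set D : ℝ := r ^ 2 - 2 * M * r + β with hDdef
  have hs : 0 ≤ Real.sqrt (M ^ 2 - β) := Real.sqrt_nonneg _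
  have hsq : Real.sqrt (M ^ 2 - β) ^ 2 = M ^ 2 - β :=
    Real.sq_sqrt (by linarith)
  have hrM : M < r := by linarith
  have hr0 : 0 < r := by linarith
  have hD : 0 < D := by
    have h1 : 0 < r - M - Real.sqrt (M ^ 2 - β) := by linarith
    have h2 : 0 < r - M + Real.sqrt (M ^ 2 - β) := by linarith
    nlinarith [mul_pos h1 h2, hsq]
  have hΔ : ∀ x : ℝ, r ≤ x → 0 < x ^ 2 - 2 * M * x + β := by
    intro x hx
    have h1 : 0 < x - M - Real.sqrt (M ^ 2 - β) := by linarith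
    have h2 : 0 < x - M + Real.sqrt (M ^ 2 - β) := by linarith
    nlinarith [mul_pos h1 h2, hsq]
  constructor
  · rintro ⟨P, hP⟩
    apply kntnFq_not_sq M β D r hM hD hr0 P
    apply Polynomial.funext
    intro x
    rw [kntnFq_eval M β D r x hDdef, eval_pow]
    exact hP x
  · rintro ⟨p, q, hq, hpq⟩
    set Fp : Polynomial ℝ := kntnFq M β D r with hFp
    set Gp : Polynomial ℝ := kntnGq M β r with hGp
    have hG0 : Gp ≠ 0 := by
      intro h0
      have h1 : Gp.eval r = 4 * r * D := by
        rw [hGp, kntnGq_eval]; rw [hDdef]; ring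
      rw [h0] at h1
      simp at h1
      rcases h1 with h | h
      · exact absurd h hr0.ne'
      · exact absurd h hD.ne'
    have hFnd : Fp.natDegree = 6 := kntnFq_natDegree M β D r
    have hFne : Fp ≠ 0 := by
      intro h0
      have := kntnFq_coeff6 M β D r
      rw [← hFp, h0] at this
      simp at this
    have hFlead : Fp.leadingCoeff = 4 := by
      rw [Polynomial.leadingCoeff, hFnd]
      exact kntnFq_coeff6 M β D r
    have hFdeg : 0 < Fp.degree := by
      rw [degree_eq_natDegree hFne, hFnd]
      exact_mod_cast (by norm_num : (0:ℕ) < 6)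
    have htop : Filter.Tendsto (fun x => Fp.eval x) Filter.atTop Filter.atTop :=
      Polynomial.tendsto_atTop_of_leadingCoeff_nonneg Fp hFdeg
        (by rw [hFlead]; norm_num)
    have hFbig : ∀ᶠ x in Filter.atTop, (1:ℝ) ≤ Fp.eval x :=
      htop.eventually_ge_atTop 1
    have hW : Fp * q ^ 2 - p ^ 2 * Gp ^ 2 = 0 := by
      by_contra hW0
      have h1 := (Fp * q ^ 2 - p ^ 2 * Gp ^ 2).eventually_no_roots hW0
      have h2 : ∀ᶠ x in Filter.atTop, (Fp * q ^ 2 - p ^ 2 * Gp ^ 2).IsRoot x := by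
        filter_upwards [hFbig, q.eventually_no_roots hq, Gp.eventually_no_roots hG0,
          Filter.eventually_gt_atTop r] with x hF hqx hGx hrx
        have hqx' : q.eval x ≠ 0 := hqx
        have hGx' : Gp.eval x ≠ 0 := hGx
        have hΔx : 0 < x ^ 2 - 2 * M * x + β := hΔ x hrx.le
        have hGev : Gp.eval x
            = (2*x - 2*M) * (r^2 - x^2) + 4*x*(x^2 - 2*M*x + β) :=
          kntnGq_eval M β r x
        have hFev : Fp.eval x
            = ((2*x - 2*M) * (r^2 - x^2) + 4*x*(x^2 - 2*M*x + β))^2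
              - 16*x^2*D*(x^2 - 2*M*x + β) := kntnFq_eval M β D r x hDdef
        set G : ℝ := (2*x - 2*M) * (r^2 - x^2) + 4*x*(x^2 - 2*M*x + β) with hGdef
        have hGne : G ≠ 0 := by rw [← hGev]; exact hGx'
        have hspec := hpq x hrx
        have hs2 : Real.sqrt (D * (x ^ 2 - 2 * M * x + β)) ^ 2
            = D * (x ^ 2 - 2 * M * x + β) :=
          Real.sq_sqrt (by positivity)
        have key : 1 - (4 * x * Real.sqrt (D * (x ^ 2 - 2 * M * x + β)) / G) ^ 2
            = Fp.eval x / G ^ 2 := by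
          rw [hFev]
          rw [div_pow, mul_pow, hs2, eq_div_iff (pow_ne_zero 2 hGne), sub_mul,
            div_mul_cancel₀ _ (pow_ne_zero 2 hGne)]
          ring
        rw [key] at hspec
        have hnn : 0 ≤ Fp.eval x / G ^ 2 := by
          apply div_nonneg (by linarith) (sq_nonneg G)
        have hsqd : Fp.eval x / G ^ 2 = (p.eval x / q.eval x) ^ 2 := by
          rw [← Real.sq_sqrt hnn, hspec]
        have hcross : Fp.eval x * (q.eval x) ^ 2 = (p.eval x) ^ 2 * G ^ 2 := by
          field_simp at hsqd
          linarith [hsqd]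
        show (Fp * q ^ 2 - p ^ 2 * Gp ^ 2).eval x = 0
        simp only [eval_sub, eval_mul, eval_pow, hGev, ← hGdef]
        linarith [hcross]
      rcases (h1.and h2).exists with ⟨x, hx1, hx2⟩
      exact hx1 hx2
    have hEq : (p * Gp) ^ 2 = q ^ 2 * Fp := by
      have : Fp * q ^ 2 = p ^ 2 * Gp ^ 2 := by linear_combination hW
      rw [mul_pow]
      linear_combination -this
    have hdvd : q ∣ p * Gp :=
      (IsIntegrallyClosed.pow_dvd_pow_iff two_ne_zero).mp ⟨Fp, hEq⟩
    obtain ⟨P, hPp⟩ := hdvd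
    have hFq2 : Fp = P ^ 2 := by
      have hq2 : q ^ 2 ≠ 0 := pow_ne_zero 2 hq
      have hqq : q ^ 2 * Fp = q ^ 2 * P ^ 2 := by
        rw [← hEq, hPp]; ring
      exact mul_left_cancel₀ hq2 hqq
    exact kntnFq_not_sq M β D r hM hD hr0 P hFq2
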